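/- Let $\xi_{k,\ell,n}$ and $\zeta_{k,\ell,n}$ be random variables such that for each $n$ the $\sigma$-algebras $\sigma(\xi_{k,\ell,n}, \zeta_{k,\ell,n} : \ell \in \mathbb{N})$, $k \in \mathbb{N}$, are independent, and $\sup_{k,\ell,n} \mathbb{E}[\xi_{k,\ell,n}^8 + \zeta_{k,\ell,n}^8] < \infty$. Let $K_n = nK + o(n)$, $L_n = nL + o(n)$ with $K, L > 0$. Then $n^{-2} \sum_{k=1}^{K_n} \sum_{\ell=1}^{L_n} (\xi_{k,\ell,n}\zeta_{k,\ell,n} - \mathbb{E}[\xi_{k,\ell,n}\zeta_{k,\ell,n}]) \to 0$ almost surely as $n \to \infty$. -/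

import Mathlib

open MeasureTheory ProbabilityTheory Filter
open scoped ENNReal NNReal

section Aux
variable {Ω : Type*} [MeasureSpace Ω] [IsProbabilityMeasure (ℙ : Measure Ω)]

omit [IsProbabilityMeasure (ℙ : Measure Ω)] in
lemma myIIndep_mono {ι : Type*} {m m' : ι → MeasurableSpace Ω}
    (h : iIndep m ℙ) (hle : ∀ i, m' i ≤ m i) : iIndep m' ℙ :=
  fun s _f hf => h s (fun i hi => hle i _ (hf i hi))

lemma my_abs_le_one_add_pow4 (t : ℝ) : |t| ≤ 1 + t^4 := by
  rcases le_total (|t|) 1 with h|h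
  · nlinarith [sq_nonneg (t^2), abs_nonneg t]
  · have : |t| ≤ |t|^4 := le_self_pow₀ h (by norm_num)
    rw [← abs_pow] at this
    have h4 : (0:ℝ) ≤ t^4 := by positivity
    rw [abs_of_nonneg h4] at this
    linarith

lemma my_sq_le_one_add_pow4 (t : ℝ) : t^2 ≤ 1 + t^4 := by
  rcases le_total (t^2) 1 with h|h
  · nlinarith [sq_nonneg (t^2)]
  · nlinarith [sq_nonneg (t^2 - 1)]

lemma my_mul_pow4_le (a b : ℝ) : (a*b)^4 ≤ (a^8 + b^8)/2 := by
  nlinarith [sq_nonneg (a^4 - b^4), sq_nonneg (a*b)]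

lemma my_sq_le_one_add_pow8 (t : ℝ) : t^2 ≤ 1 + t^8 := by
  rcases le_total (t^2) 1 with h|h
  · nlinarith [sq_nonneg (t^4)]
  · have h2 : t^2 ≤ (t^2)^4 := le_self_pow₀ h (by norm_num)
    nlinarith [h2]

lemma my_abs_mul_le (a b : ℝ) : |a * b| ≤ 1 + (a^8 + b^8) := by
  have h1 : |a*b| ≤ (a^2 + b^2)/2 := by
    rw [abs_mul]
    nlinarith [sq_nonneg (|a| - |b|), sq_abs a, sq_abs b]
  have h2 := my_sq_le_one_add_pow8 a
  have h3 := my_sq_le_one_add_pow8 b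
  have h4 : (0:ℝ) ≤ a^8 := by positivity
  have h5 : (0:ℝ) ≤ b^8 := by positivity
  linarith

lemma my_sub_pow4_le (p c : ℝ) : (p - c)^4 ≤ 8*(p^4 + c^4) := by
  nlinarith [sq_nonneg (p - c), sq_nonneg (p + c), sq_nonneg ((p-c)^2 - 2*(p^2+c^2)), sq_nonneg (p^2 - c^2), sq_nonneg p, sq_nonneg c]


lemma myIntegrable_pow_le {g : Ω → ℝ} (hg : Measurable g)
    (h4 : Integrable (fun ω => (g ω)^4) ℙ) {j : ℕ} (hj : j ≤ 4) :
    Integrable (fun ω => (g ω)^j) ℙ := by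
  have hI : Integrable (fun ω => 1 + (g ω)^4) ℙ := (integrable_const 1).add h4
  refine hI.mono ((hg.pow_const j).aestronglyMeasurable) (ae_of_all _ fun ω => ?_)
  rw [Real.norm_eq_abs, Real.norm_eq_abs, abs_pow]
  have h40 : (0:ℝ) ≤ (g ω)^4 := by positivity
  have : |1 + (g ω)^4| = 1 + (g ω)^4 := abs_of_nonneg (by linarith)
  rw [this]
  rcases le_total (|g ω|) 1 with h|h
  · have := pow_le_one₀ (abs_nonneg (g ω)) h (n := j)
    linarith
  · have h1 : |g ω|^j ≤ |g ω|^4 := pow_le_pow_right₀ h hj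
    have h2 : |g ω|^4 = (g ω)^4 := by rw [← abs_pow, abs_of_nonneg h40]
    linarith


lemma myMomX {ξ ζ : Ω → ℝ} (hξ : Measurable ξ) (hζ : Measurable ζ) (M : ℝ)
    (hmom : (∫ ω, ((ξ ω)^8 + (ζ ω)^8) ∂ℙ) ≤ M)
    (hint : Integrable (fun ω => (ξ ω)^8 + (ζ ω)^8) ℙ) :
    Integrable (fun ω => ξ ω * ζ ω - ∫ ω', ξ ω' * ζ ω' ∂ℙ) ℙ ∧
    (∫ ω, (ξ ω * ζ ω - ∫ ω', ξ ω' * ζ ω' ∂ℙ) ∂ℙ) = 0 ∧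
    Integrable (fun ω => (ξ ω * ζ ω - ∫ ω', ξ ω' * ζ ω' ∂ℙ)^4) ℙ ∧
    (∫ ω, (ξ ω * ζ ω - ∫ ω', ξ ω' * ζ ω' ∂ℙ)^4 ∂ℙ) ≤ 8*(M/2 + (1 + M/2)^4) ∧
    (∫ ω, (ξ ω * ζ ω - ∫ ω', ξ ω' * ζ ω' ∂ℙ)^2 ∂ℙ) ≤ 1 + 8*(M/2 + (1 + M/2)^4) := by
  have hmeaspr : Measurable (fun ω => ξ ω * ζ ω) := hξ.mul hζ
  -- integrability of the product
  have haux1 : Integrable (fun ω => 1 + ((ξ ω)^8 + (ζ ω)^8)) ℙ := (integrable_const 1).add hint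
  have Ipr : Integrable (fun ω => ξ ω * ζ ω) ℙ := by
    refine haux1.mono hmeaspr.aestronglyMeasurable
      (ae_of_all _ fun ω => ?_)
    rw [Real.norm_eq_abs, Real.norm_eq_abs]
    have h8 : (0:ℝ) ≤ (ξ ω)^8 + (ζ ω)^8 := by positivity
    rw [abs_of_nonneg (by linarith : (0:ℝ) ≤ 1 + ((ξ ω)^8 + (ζ ω)^8))]
    exact my_abs_mul_le _ _
  -- integrability of the 4th power of the product
  have Ipr4 : Integrable (fun ω => (ξ ω * ζ ω)^4) ℙ := by
    refine hint.mono (hmeaspr.pow_const 4).aestronglyMeasurable (ae_of_all _ fun ω => ?_)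
    rw [Real.norm_eq_abs, Real.norm_eq_abs]
    have h8 : (0:ℝ) ≤ (ξ ω)^8 + (ζ ω)^8 := by positivity
    rw [abs_of_nonneg (by positivity : (0:ℝ) ≤ (ξ ω * ζ ω)^4), abs_of_nonneg h8]
    have := my_mul_pow4_le (ξ ω) (ζ ω)
    linarith
  -- bound on 4th moment of the product
  have E4pr : (∫ ω, (ξ ω * ζ ω)^4 ∂ℙ) ≤ M/2 := by
    have h1 : (∫ ω, (ξ ω * ζ ω)^4 ∂ℙ) ≤ ∫ ω, ((ξ ω)^8 + (ζ ω)^8)/2 ∂ℙ := by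
      refine integral_mono Ipr4 (hint.div_const 2) fun ω => my_mul_pow4_le _ _
    rw [integral_div] at h1
    linarith
  set c := ∫ ω', ξ ω' * ζ ω' ∂ℙ with hc
  -- bound on |c|
  have hcbound : |c| ≤ 1 + M/2 := by
    have h1 : |c| ≤ ∫ ω, |ξ ω * ζ ω| ∂ℙ := by
      rw [hc]
      have := norm_integral_le_integral_norm (μ := (ℙ : Measure Ω)) (fun ω => ξ ω * ζ ω)
      simpa only [Real.norm_eq_abs] using this
    have h2 : (∫ ω, |ξ ω * ζ ω| ∂ℙ) ≤ ∫ ω, (1 + (ξ ω * ζ ω)^4) ∂ℙ := by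
      refine integral_mono Ipr.abs ((integrable_const 1).add Ipr4) fun ω => ?_
      exact my_abs_le_one_add_pow4 _
    rw [integral_add (integrable_const 1) Ipr4, integral_const] at h2
    simp at h1 h2
    linarith
  have hM2 : 0 ≤ M := by
    have h0 : (0:ℝ) ≤ ∫ ω, ((ξ ω)^8 + (ζ ω)^8) ∂ℙ :=
      integral_nonneg fun ω => by positivity
    linarith
  -- X facts
  have IX : Integrable (fun ω => ξ ω * ζ ω - c) ℙ := Ipr.sub (integrable_const c)
  have EX : (∫ ω, (ξ ω * ζ ω - c) ∂ℙ) = 0 := by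
    rw [integral_sub Ipr (integrable_const c), integral_const]
    simp [hc]
  have haux2 : Integrable (fun ω => 8 * ((ξ ω * ζ ω)^4 + c^4)) ℙ :=
    (Ipr4.add (integrable_const (c^4))).const_mul 8
  have IX4 : Integrable (fun ω => (ξ ω * ζ ω - c)^4) ℙ := by
    refine haux2.mono
      ((hmeaspr.sub measurable_const).pow_const 4).aestronglyMeasurable
      (ae_of_all _ fun ω => ?_)
    rw [Real.norm_eq_abs, Real.norm_eq_abs]
    rw [abs_of_nonneg (by positivity : (0:ℝ) ≤ (ξ ω * ζ ω - c)^4)]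
    have h1 := my_sub_pow4_le (ξ ω * ζ ω) c
    have h2 : (0:ℝ) ≤ 8 * ((ξ ω * ζ ω)^4 + c^4) := by positivity
    rw [abs_of_nonneg h2]
    linarith
  have EX4 : (∫ ω, (ξ ω * ζ ω - c)^4 ∂ℙ) ≤ 8*(M/2 + (1 + M/2)^4) := by
    have h1 : (∫ ω, (ξ ω * ζ ω - c)^4 ∂ℙ) ≤ ∫ ω, 8 * ((ξ ω * ζ ω)^4 + c^4) ∂ℙ := by
      refine integral_mono IX4 ((Ipr4.add (integrable_const (c^4))).const_mul 8) fun ω =>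
        my_sub_pow4_le _ _
    rw [integral_const_mul, integral_add Ipr4 (integrable_const (c^4)), integral_const] at h1
    simp at h1
    have hc4 : c^4 ≤ (1 + M/2)^4 := by
      calc c^4 = |c|^4 := by rw [← abs_pow, abs_of_nonneg (by positivity)]
      _ ≤ (1 + M/2)^4 := pow_le_pow_left₀ (abs_nonneg c) hcbound 4
    nlinarith [E4pr]
  have IX2 : Integrable (fun ω => (ξ ω * ζ ω - c)^2) ℙ :=
    myIntegrable_pow_le (hmeaspr.sub measurable_const) IX4 (by norm_num)
  have EX2 : (∫ ω, (ξ ω * ζ ω - c)^2 ∂ℙ) ≤ 1 + 8*(M/2 + (1 + M/2)^4) := by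
    have h1 : (∫ ω, (ξ ω * ζ ω - c)^2 ∂ℙ) ≤ ∫ ω, (1 + (ξ ω * ζ ω - c)^4) ∂ℙ := by
      refine integral_mono IX2 ((integrable_const 1).add IX4) fun ω =>
        my_sq_le_one_add_pow4 _
    rw [integral_add (integrable_const 1) IX4, integral_const] at h1
    simp at h1
    linarith
  exact ⟨IX, EX, IX4, EX4, EX2⟩

lemma fourth_moment_sum (f : ℕ → Ω → ℝ) (hmeas : ∀ i, Measurable (f i))
    (hindep : iIndepFun f ℙ)
    (hcent : ∀ i, ∫ ω, f i ω ∂ℙ = 0)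
    (hint4 : ∀ i, Integrable (fun ω => (f i ω)^4) ℙ)
    (s : Finset ℕ) :
    Integrable (fun ω => ∑ i ∈ s, f i ω) ℙ ∧
    (∫ ω, (∑ i ∈ s, f i ω) ∂ℙ) = 0 ∧
    Integrable (fun ω => (∑ i ∈ s, f i ω)^4) ℙ ∧
    (∫ ω, (∑ i ∈ s, f i ω)^2 ∂ℙ) = ∑ i ∈ s, ∫ ω, (f i ω)^2 ∂ℙ ∧
    (∫ ω, (∑ i ∈ s, f i ω)^4 ∂ℙ) ≤
      3 * (∑ i ∈ s, ∫ ω, (f i ω)^2 ∂ℙ)^2 + ∑ i ∈ s, ∫ ω, (f i ω)^4 ∂ℙ := by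
  classical
  induction s using Finset.induction_on with
  | empty => simp
  | @insert j s hj ih =>
    obtain ⟨ihInt, ihZero, ihInt4, ihSq, ihBound⟩ := ih
    set T : Ω → ℝ := fun ω => ∑ i ∈ s, f i ω with hT
    have hmeasT : Measurable T := by
      apply Finset.measurable_sum
      exact fun i _ => hmeas i
    -- independence of T and f j
    have hTfun : T = ∑ i ∈ s, f i := by
      funext ω; simp [hT]
    have hindepTY : IndepFun T (f j) ℙ := by
      rw [hTfun]
      exact hindep.indepFun_finsetSum_of_notMem hmeas hj
    -- independence of powers
    have hpow : ∀ a b : ℕ, IndepFun (fun ω => (T ω)^a) (fun ω => (f j ω)^b) ℙ := by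
      intro a b
      exact hindepTY.comp (measurable_id.pow_const a) (measurable_id.pow_const b)
    -- integrability of powers
    have hIT : ∀ a ≤ 4, Integrable (fun ω => (T ω)^a) ℙ :=
      fun a ha => myIntegrable_pow_le hmeasT ihInt4 ha
    have hIY : ∀ b ≤ 4, Integrable (fun ω => (f j ω)^b) ℙ :=
      fun b hb => myIntegrable_pow_le (hmeas j) (hint4 j) hb
    -- integrability of products
    have hITY : ∀ a b : ℕ, a ≤ 4 → b ≤ 4 →
        Integrable (fun ω => (T ω)^a * (f j ω)^b) ℙ :=
      fun a b ha hb => (hpow a b).integrable_mul (hIT a ha) (hIY b hb)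
    have hETY : ∀ a b : ℕ, a ≤ 4 → b ≤ 4 →
        (∫ ω, (T ω)^a * (f j ω)^b ∂ℙ) = (∫ ω, (T ω)^a ∂ℙ) * ∫ ω, (f j ω)^b ∂ℙ :=
      fun a b ha hb => (hpow a b).integral_fun_mul_eq_mul_integral (hIT a ha).aestronglyMeasurable (hIY b hb).aestronglyMeasurable
    have hsum : ∀ ω, ∑ i ∈ insert j s, f i ω = T ω + f j ω := by
      intro ω; rw [Finset.sum_insert hj]; ring
    have hTzero : (∫ ω, T ω ∂ℙ) = 0 := ihZero
    have hYint : Integrable (f j) ℙ := by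
      have := hIY 1 (by norm_num); simpa using this
    have hYzero : (∫ ω, f j ω ∂ℙ) = 0 := hcent j
    -- named integrable pieces
    have I31 : Integrable (fun ω => 4 * (T ω^3 * f j ω^1)) ℙ :=
      (hITY 3 1 (by norm_num) (by norm_num)).const_mul 4
    have I22 : Integrable (fun ω => 6 * (T ω^2 * f j ω^2)) ℙ :=
      (hITY 2 2 (by norm_num) (by norm_num)).const_mul 6
    have I13 : Integrable (fun ω => 4 * (T ω^1 * f j ω^3)) ℙ :=
      (hITY 1 3 (by norm_num) (by norm_num)).const_mul 4
    have I11 : Integrable (fun ω => 2 * (T ω^1 * f j ω^1)) ℙ :=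
      (hITY 1 1 (by norm_num) (by norm_num)).const_mul 2
    have Ia : Integrable (fun ω => (T ω)^4 + 4 * (T ω^3 * f j ω^1)) ℙ := ihInt4.add I31
    have Ib : Integrable (fun ω => (T ω)^4 + 4 * (T ω^3 * f j ω^1) + 6 * (T ω^2 * f j ω^2)) ℙ :=
      Ia.add I22
    have Ic : Integrable (fun ω => (T ω)^4 + 4 * (T ω^3 * f j ω^1) + 6 * (T ω^2 * f j ω^2)
        + 4 * (T ω^1 * f j ω^3)) ℙ := Ib.add I13
    -- new integrability
    have hint1' : Integrable (fun ω => ∑ i ∈ insert j s, f i ω) ℙ := by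
      simp only [hsum]; exact ihInt.add hYint
    -- zero mean
    have hzero' : (∫ ω, ∑ i ∈ insert j s, f i ω ∂ℙ) = 0 := by
      simp only [hsum]
      rw [integral_add ihInt hYint, hTzero, hYzero]; ring
    -- expansion of 4th power
    have hexp4 : ∀ ω, (T ω + f j ω)^4 =
        (T ω)^4 + 4 * ((T ω)^3 * (f j ω)^1) + 6 * ((T ω)^2 * (f j ω)^2)
          + 4 * ((T ω)^1 * (f j ω)^3) + (f j ω)^4 := by intro ω; ring
    have hint4' : Integrable (fun ω => (∑ i ∈ insert j s, f i ω)^4) ℙ := by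
      simp only [hsum, hexp4]
      exact Ic.add (hint4 j)
    -- integral of 4th power
    have hE4 : (∫ ω, (∑ i ∈ insert j s, f i ω)^4 ∂ℙ) =
        (∫ ω, (T ω)^4 ∂ℙ) + 6 * ((∫ ω, (T ω)^2 ∂ℙ) * ∫ ω, (f j ω)^2 ∂ℙ)
          + ∫ ω, (f j ω)^4 ∂ℙ := by
      simp only [hsum, hexp4]
      rw [integral_add Ic (hint4 j), integral_add Ib I13, integral_add Ia I22,
          integral_add ihInt4 I31,
          integral_const_mul, integral_const_mul, integral_const_mul,
          hETY 3 1 (by norm_num) (by norm_num), hETY 2 2 (by norm_num) (by norm_num),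
          hETY 1 3 (by norm_num) (by norm_num)]
      simp only [pow_one, hYzero, hTzero]
      simp only [hT]
      ring
    -- integral of square
    have hexp2 : ∀ ω, (T ω + f j ω)^2 = (T ω)^2 + 2*((T ω)^1 * (f j ω)^1) + (f j ω)^2 := by
      intro ω; ring
    have Id : Integrable (fun ω => (T ω)^2 + 2 * (T ω^1 * f j ω^1)) ℙ :=
      (hIT 2 (by norm_num)).add I11
    have hsq' : (∫ ω, (∑ i ∈ insert j s, f i ω)^2 ∂ℙ)
        = ∑ i ∈ insert j s, ∫ ω, (f i ω)^2 ∂ℙ := by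
      simp only [hsum, hexp2]
      rw [integral_add Id (hIY 2 (by norm_num)),
          integral_add (hIT 2 (by norm_num)) I11,
          integral_const_mul, hETY 1 1 (by norm_num) (by norm_num)]
      simp only [pow_one, hYzero, hTzero]
      simp only [hT]
      rw [ihSq, Finset.sum_insert hj]
      ring
    refine ⟨hint1', hzero', hint4', hsq', ?_⟩
    -- final bound
    rw [hE4, ihSq]
    rw [Finset.sum_insert hj, Finset.sum_insert hj]
    set b := ∑ i ∈ s, ∫ ω, (f i ω)^2 ∂ℙ
    set c := ∫ ω, (f j ω)^2 ∂ℙ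
    nlinarith [ihBound, sq_nonneg c]

lemma myYsum (g : ℕ → Ω → ℝ) (hmeas : ∀ ℓ, Measurable (g ℓ)) (t : Finset ℕ)
    (Ig : ∀ ℓ, Integrable (g ℓ) ℙ) (Eg : ∀ ℓ, (∫ ω, g ℓ ω ∂ℙ) = 0)
    (Ig4 : ∀ ℓ, Integrable (fun ω => (g ℓ ω)^4) ℙ)
    (C2 C4 : ℝ) (hE2 : ∀ ℓ, (∫ ω, (g ℓ ω)^2 ∂ℙ) ≤ C2)
    (hE4 : ∀ ℓ, (∫ ω, (g ℓ ω)^4 ∂ℙ) ≤ C4) :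
    Integrable (fun ω => ∑ ℓ ∈ t, g ℓ ω) ℙ ∧
    (∫ ω, (∑ ℓ ∈ t, g ℓ ω) ∂ℙ) = 0 ∧
    Integrable (fun ω => (∑ ℓ ∈ t, g ℓ ω)^4) ℙ ∧
    (∫ ω, (∑ ℓ ∈ t, g ℓ ω)^2 ∂ℙ) ≤ (t.card : ℝ)^2 * C2 ∧
    (∫ ω, (∑ ℓ ∈ t, g ℓ ω)^4 ∂ℙ) ≤ (t.card : ℝ)^4 * C4 := by
  have hmeasS : Measurable (fun ω => ∑ ℓ ∈ t, g ℓ ω) :=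
    Finset.measurable_sum t fun ℓ _ => hmeas ℓ
  have IS : Integrable (fun ω => ∑ ℓ ∈ t, g ℓ ω) ℙ :=
    integrable_finset_sum t fun ℓ _ => Ig ℓ
  have ES : (∫ ω, (∑ ℓ ∈ t, g ℓ ω) ∂ℙ) = 0 := by
    rw [integral_finset_sum t fun ℓ _ => Ig ℓ]
    simp [Eg]
  -- pointwise 4th power bound
  have hpt4 : ∀ ω, (∑ ℓ ∈ t, g ℓ ω)^4 ≤ (t.card : ℝ)^3 * ∑ ℓ ∈ t, (g ℓ ω)^4 := by
    intro ω
    have h1 : |∑ ℓ ∈ t, g ℓ ω| ≤ ∑ ℓ ∈ t, |g ℓ ω| := Finset.abs_sum_le_sum_abs _ _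
    have h2 : (∑ ℓ ∈ t, g ℓ ω)^4 = |∑ ℓ ∈ t, g ℓ ω|^4 := by
      rw [← abs_pow, abs_of_nonneg (by positivity)]
    have h3 : |∑ ℓ ∈ t, g ℓ ω|^4 ≤ (∑ ℓ ∈ t, |g ℓ ω|)^4 :=
      pow_le_pow_left₀ (abs_nonneg _) h1 4
    have h4 : (∑ ℓ ∈ t, |g ℓ ω|)^4 ≤ (t.card : ℝ)^3 * ∑ ℓ ∈ t, |g ℓ ω|^4 := by
      have := pow_sum_le_card_mul_sum_pow (s := t) (f := fun ℓ => |g ℓ ω|)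
        (fun i _ => abs_nonneg _) 3
      simpa using this
    have h5 : ∑ ℓ ∈ t, |g ℓ ω|^4 = ∑ ℓ ∈ t, (g ℓ ω)^4 := by
      refine Finset.sum_congr rfl fun ℓ _ => ?_
      rw [← abs_pow, abs_of_nonneg (by positivity)]
    rw [h2]; rw [h5] at h4; linarith
  -- pointwise square bound
  have hpt2 : ∀ ω, (∑ ℓ ∈ t, g ℓ ω)^2 ≤ (t.card : ℝ) * ∑ ℓ ∈ t, (g ℓ ω)^2 := by
    intro ω
    have := sq_sum_le_card_mul_sum_sq (s := t) (f := fun ℓ => g ℓ ω)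
    simpa using this
  have Idom4 : Integrable (fun ω => (t.card : ℝ)^3 * ∑ ℓ ∈ t, (g ℓ ω)^4) ℙ :=
    (integrable_finset_sum t fun ℓ _ => Ig4 ℓ).const_mul _
  have IS4 : Integrable (fun ω => (∑ ℓ ∈ t, g ℓ ω)^4) ℙ := by
    refine Idom4.mono (hmeasS.pow_const 4).aestronglyMeasurable (ae_of_all _ fun ω => ?_)
    rw [Real.norm_eq_abs, Real.norm_eq_abs, abs_of_nonneg (by positivity : (0:ℝ) ≤ (∑ ℓ ∈ t, g ℓ ω)^4)]
    have hnn : (0:ℝ) ≤ (t.card : ℝ)^3 * ∑ ℓ ∈ t, (g ℓ ω)^4 := by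
      have : (0:ℝ) ≤ ∑ ℓ ∈ t, (g ℓ ω)^4 := Finset.sum_nonneg fun ℓ _ => by positivity
      positivity
    rw [abs_of_nonneg hnn]
    exact hpt4 ω
  have ES4 : (∫ ω, (∑ ℓ ∈ t, g ℓ ω)^4 ∂ℙ) ≤ (t.card : ℝ)^4 * C4 := by
    have h1 : (∫ ω, (∑ ℓ ∈ t, g ℓ ω)^4 ∂ℙ) ≤ ∫ ω, (t.card : ℝ)^3 * ∑ ℓ ∈ t, (g ℓ ω)^4 ∂ℙ :=
      integral_mono IS4 Idom4 hpt4
    rw [integral_const_mul, integral_finset_sum t fun ℓ _ => Ig4 ℓ] at h1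
    have h2 : ∑ ℓ ∈ t, (∫ ω, (g ℓ ω)^4 ∂ℙ) ≤ (t.card : ℝ) * C4 := by
      have := Finset.sum_le_card_nsmul t (fun ℓ => ∫ ω, (g ℓ ω)^4 ∂ℙ) C4 fun ℓ _ => hE4 ℓ
      simpa [nsmul_eq_mul] using this
    have hcard : (0:ℝ) ≤ (t.card : ℝ) := Nat.cast_nonneg _
    calc (∫ ω, (∑ ℓ ∈ t, g ℓ ω)^4 ∂ℙ) ≤ (t.card : ℝ)^3 * ∑ ℓ ∈ t, (∫ ω, (g ℓ ω)^4 ∂ℙ) := h1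
      _ ≤ (t.card : ℝ)^3 * ((t.card : ℝ) * C4) := by
          apply mul_le_mul_of_nonneg_left h2 (by positivity)
      _ = (t.card : ℝ)^4 * C4 := by ring
  have Ig2 : ∀ ℓ, Integrable (fun ω => (g ℓ ω)^2) ℙ :=
    fun ℓ => myIntegrable_pow_le (hmeas ℓ) (Ig4 ℓ) (by norm_num)
  have IS2 : Integrable (fun ω => (∑ ℓ ∈ t, g ℓ ω)^2) ℙ :=
    myIntegrable_pow_le hmeasS IS4 (by norm_num)
  have ES2 : (∫ ω, (∑ ℓ ∈ t, g ℓ ω)^2 ∂ℙ) ≤ (t.card : ℝ)^2 * C2 := by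
    have Idom2 : Integrable (fun ω => (t.card : ℝ) * ∑ ℓ ∈ t, (g ℓ ω)^2) ℙ :=
      (integrable_finset_sum t fun ℓ _ => Ig2 ℓ).const_mul _
    have h1 : (∫ ω, (∑ ℓ ∈ t, g ℓ ω)^2 ∂ℙ) ≤ ∫ ω, (t.card : ℝ) * ∑ ℓ ∈ t, (g ℓ ω)^2 ∂ℙ :=
      integral_mono IS2 Idom2 hpt2
    rw [integral_const_mul, integral_finset_sum t fun ℓ _ => Ig2 ℓ] at h1
    have h2 : ∑ ℓ ∈ t, (∫ ω, (g ℓ ω)^2 ∂ℙ) ≤ (t.card : ℝ) * C2 := by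
      have := Finset.sum_le_card_nsmul t (fun ℓ => ∫ ω, (g ℓ ω)^2 ∂ℙ) C2 fun ℓ _ => hE2 ℓ
      simpa [nsmul_eq_mul] using this
    calc (∫ ω, (∑ ℓ ∈ t, g ℓ ω)^2 ∂ℙ) ≤ (t.card : ℝ) * ∑ ℓ ∈ t, (∫ ω, (g ℓ ω)^2 ∂ℙ) := h1
      _ ≤ (t.card : ℝ) * ((t.card : ℝ) * C2) := by
          apply mul_le_mul_of_nonneg_left h2 (Nat.cast_nonneg _)
      _ = (t.card : ℝ)^2 * C2 := by ring
  exact ⟨IS, ES, IS4, ES2, ES4⟩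

lemma mySumBound (f : ℕ → Ω → ℝ) (hmeas : ∀ i, Measurable (f i))
    (hindep : iIndepFun f ℙ)
    (hcent : ∀ i, ∫ ω, f i ω ∂ℙ = 0)
    (hint4 : ∀ i, Integrable (fun ω => (f i ω)^4) ℙ)
    (C2 C4 : ℝ) (hE2 : ∀ i, (∫ ω, (f i ω)^2 ∂ℙ) ≤ C2)
    (hE4 : ∀ i, (∫ ω, (f i ω)^4 ∂ℙ) ≤ C4)
    (s : Finset ℕ) :
    Integrable (fun ω => (∑ i ∈ s, f i ω)^4) ℙ ∧
    (∫ ω, (∑ i ∈ s, f i ω)^4 ∂ℙ) ≤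
      3 * ((s.card : ℝ) * C2)^2 + (s.card : ℝ) * C4 := by
  obtain ⟨-, -, hint4', hsq, hbound⟩ := fourth_moment_sum f hmeas hindep hcent hint4 s
  refine ⟨hint4', ?_⟩
  have hs2 : ∑ i ∈ s, (∫ ω, (f i ω)^2 ∂ℙ) ≤ (s.card : ℝ) * C2 := by
    have := Finset.sum_le_card_nsmul s (fun i => ∫ ω, (f i ω)^2 ∂ℙ) C2 fun i _ => hE2 i
    simpa [nsmul_eq_mul] using this
  have hs2nn : 0 ≤ ∑ i ∈ s, (∫ ω, (f i ω)^2 ∂ℙ) :=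
    Finset.sum_nonneg fun i _ => integral_nonneg fun ω => by positivity
  have hs4 : ∑ i ∈ s, (∫ ω, (f i ω)^4 ∂ℙ) ≤ (s.card : ℝ) * C4 := by
    have := Finset.sum_le_card_nsmul s (fun i => ∫ ω, (f i ω)^4 ∂ℙ) C4 fun i _ => hE4 i
    simpa [nsmul_eq_mul] using this
  have hsqle : (∑ i ∈ s, ∫ ω, (f i ω)^2 ∂ℙ)^2 ≤ ((s.card : ℝ) * C2)^2 :=
    pow_le_pow_left₀ hs2nn hs2 2
  linarith


end Aux

theorem stmt2
    {Ω : Type*} [MeasureSpace Ω] [IsProbabilityMeasure (ℙ : Measure Ω)]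
    (ξ ζ : ℕ → ℕ → ℕ → Ω → ℝ)
    (hmeasξ : ∀ n k ℓ, Measurable (ξ n k ℓ))
    (hmeasζ : ∀ n k ℓ, Measurable (ζ n k ℓ))
    (hindep : ∀ n, iIndep
      (fun k : ℕ => ⨆ ℓ : ℕ,
        (MeasurableSpace.comap (ξ n k ℓ) (borel ℝ) ⊔
         MeasurableSpace.comap (ζ n k ℓ) (borel ℝ))) ℙ)
    (M : ℝ)
    (hmom : ∀ n k ℓ, ∫ ω, ((ξ n k ℓ ω) ^ 8 + (ζ n k ℓ ω) ^ 8) ∂ℙ ≤ M)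
    (hint : ∀ n k ℓ, Integrable (fun ω => (ξ n k ℓ ω) ^ 8 + (ζ n k ℓ ω) ^ 8) ℙ)
    (K L : ℝ) (hK : 0 < K) (hL : 0 < L)
    (Kn Ln : ℕ → ℕ) (hKn0 : ∀ n, 0 < Kn n) (hLn0 : ∀ n, 0 < Ln n)
    (hKn : Tendsto (fun n => (Kn n : ℝ) / n) atTop (nhds K))
    (hLn : Tendsto (fun n => (Ln n : ℝ) / n) atTop (nhds L)) :
    ∀ᵐ ω ∂(ℙ : Measure Ω),
      Tendsto (fun n : ℕ =>
        (n : ℝ) ^ (-2 : ℤ) *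
          ∑ k ∈ Finset.Icc 1 (Kn n), ∑ ℓ ∈ Finset.Icc 1 (Ln n),
            (ξ n k ℓ ω * ζ n k ℓ ω - ∫ ω', ξ n k ℓ ω' * ζ n k ℓ ω' ∂ℙ))
        atTop (nhds 0) := by
  classical
  -- basic constants
  set C4 : ℝ := 8*(M/2 + (1 + M/2)^4) with hC4def
  set C2 : ℝ := 1 + C4 with hC2def
  have hM0 : 0 ≤ M := by
    have h0 : (0:ℝ) ≤ ∫ ω, ((ξ 0 0 0 ω)^8 + (ζ 0 0 0 ω)^8) ∂ℙ :=
      integral_nonneg fun ω => by positivity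
    exact le_trans h0 (hmom 0 0 0)
  have hC4nn : 0 ≤ C4 := by
    have : (0:ℝ) ≤ (1 + M/2)^4 := by positivity
    rw [hC4def]; linarith
  have hC2nn : 0 ≤ C2 := by rw [hC2def]; linarith
  -- centered variables
  set X : ℕ → ℕ → ℕ → Ω → ℝ :=
    fun n k ℓ ω => ξ n k ℓ ω * ζ n k ℓ ω - ∫ ω', ξ n k ℓ ω' * ζ n k ℓ ω' ∂ℙ with hXdef
  have hmeasX : ∀ n k ℓ, Measurable (X n k ℓ) :=
    fun n k ℓ => ((hmeasξ n k ℓ).mul (hmeasζ n k ℓ)).sub measurable_const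
  have hXfacts : ∀ n k ℓ, Integrable (X n k ℓ) ℙ ∧ (∫ ω, X n k ℓ ω ∂ℙ) = 0 ∧
      Integrable (fun ω => (X n k ℓ ω)^4) ℙ ∧ (∫ ω, (X n k ℓ ω)^4 ∂ℙ) ≤ C4 ∧
      (∫ ω, (X n k ℓ ω)^2 ∂ℙ) ≤ C2 :=
    fun n k ℓ => myMomX (hmeasξ n k ℓ) (hmeasζ n k ℓ) M (hmom n k ℓ) (hint n k ℓ)
  -- inner sums
  set Y : ℕ → ℕ → Ω → ℝ := fun n k ω => ∑ ℓ ∈ Finset.Icc 1 (Ln n), X n k ℓ ω with hYdef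
  have hmeasY : ∀ n k, Measurable (Y n k) :=
    fun n k => Finset.measurable_sum _ fun ℓ _ => hmeasX n k ℓ
  have hYfacts : ∀ n k, Integrable (Y n k) ℙ ∧ (∫ ω, Y n k ω ∂ℙ) = 0 ∧
      Integrable (fun ω => (Y n k ω)^4) ℙ ∧
      (∫ ω, (Y n k ω)^2 ∂ℙ) ≤ ((Ln n : ℝ))^2 * C2 ∧
      (∫ ω, (Y n k ω)^4 ∂ℙ) ≤ ((Ln n : ℝ))^4 * C4 := by
    intro n k
    have h := myYsum (fun ℓ => X n k ℓ) (fun ℓ => hmeasX n k ℓ) (Finset.Icc 1 (Ln n))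
      (fun ℓ => (hXfacts n k ℓ).1) (fun ℓ => (hXfacts n k ℓ).2.1)
      (fun ℓ => (hXfacts n k ℓ).2.2.1) C2 C4
      (fun ℓ => (hXfacts n k ℓ).2.2.2.2) (fun ℓ => (hXfacts n k ℓ).2.2.2.1)
    have hcard : ((Finset.Icc 1 (Ln n)).card : ℝ) = (Ln n : ℝ) := by
      simp [Nat.card_Icc]
    rw [hcard] at h
    exact h
  -- independence of the Y's
  have hindepY : ∀ n, iIndepFun (Y n) ℙ := by
    intro n
    refine myIIndep_mono (hindep n) fun k => ?_
    rw [← measurable_iff_comap_le]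
    apply @Finset.measurable_sum _ _ _ _ _ _ _ _
    intro ℓ _
    have hξm : Measurable[⨆ ℓ : ℕ, (MeasurableSpace.comap (ξ n k ℓ) (borel ℝ) ⊔
        MeasurableSpace.comap (ζ n k ℓ) (borel ℝ))] (ξ n k ℓ) := by
      rw [measurable_iff_comap_le, BorelSpace.measurable_eq (α := ℝ)]
      exact le_trans le_sup_left (le_iSup (fun ℓ' => MeasurableSpace.comap (ξ n k ℓ') (borel ℝ) ⊔
        MeasurableSpace.comap (ζ n k ℓ') (borel ℝ)) ℓ)
    have hζm : Measurable[⨆ ℓ : ℕ, (MeasurableSpace.comap (ξ n k ℓ) (borel ℝ) ⊔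
        MeasurableSpace.comap (ζ n k ℓ) (borel ℝ))] (ζ n k ℓ) := by
      rw [measurable_iff_comap_le, BorelSpace.measurable_eq (α := ℝ)]
      exact le_trans le_sup_right (le_iSup (fun ℓ' => MeasurableSpace.comap (ξ n k ℓ') (borel ℝ) ⊔
        MeasurableSpace.comap (ζ n k ℓ') (borel ℝ)) ℓ)
    exact (hξm.mul hζm).sub measurable_const
  -- outer sums
  have hScard : ∀ n, ((Finset.Icc 1 (Kn n)).card : ℝ) = (Kn n : ℝ) := by
    intro n; simp [Nat.card_Icc]
  have hSfacts : ∀ n, Integrable (fun ω => (∑ k ∈ Finset.Icc 1 (Kn n), Y n k ω)^4) ℙ ∧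
      (∫ ω, (∑ k ∈ Finset.Icc 1 (Kn n), Y n k ω)^4 ∂ℙ) ≤
        3 * ((Kn n : ℝ) * ((Ln n : ℝ)^2 * C2))^2 + (Kn n : ℝ) * ((Ln n : ℝ)^4 * C4) := by
    intro n
    have h := mySumBound (Y n) (hmeasY n) (hindepY n)
      (fun k => (hYfacts n k).2.1) (fun k => (hYfacts n k).2.2.1)
      ((Ln n : ℝ)^2 * C2) ((Ln n : ℝ)^4 * C4)
      (fun k => (hYfacts n k).2.2.2.1) (fun k => (hYfacts n k).2.2.2.2)
      (Finset.Icc 1 (Kn n))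
    rw [hScard n] at h
    exact h
  -- definition of the normalized quantity
  set F : ℕ → Ω → ℝ := fun n ω =>
    (n : ℝ)^(-2:ℤ) * ∑ k ∈ Finset.Icc 1 (Kn n), Y n k ω with hFdef
  have hmeasF4 : ∀ n, Measurable (fun ω => (F n ω)^4) := fun n =>
    ((measurable_const.mul (Finset.measurable_sum _ fun k _ => hmeasY n k)).pow_const 4)
  have hFexp : ∀ n, (fun ω => (F n ω)^4) =
      fun ω => ((n:ℝ)^(-2:ℤ))^4 * (∑ k ∈ Finset.Icc 1 (Kn n), Y n k ω)^4 := by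
    intro n; funext ω; rw [hFdef]; ring
  have hIF4 : ∀ n, Integrable (fun ω => (F n ω)^4) ℙ := by
    intro n
    rw [hFexp n]
    exact ((hSfacts n).1).const_mul _
  set a : ℕ → ℝ := fun n => ∫ ω, (F n ω)^4 ∂ℙ with hadef
  have hann : ∀ n, 0 ≤ a n := fun n => integral_nonneg fun ω => by positivity
  have haeq : ∀ n, a n = ((n:ℝ)^(-2:ℤ))^4 *
      ∫ ω, (∑ k ∈ Finset.Icc 1 (Kn n), Y n k ω)^4 ∂ℙ := by
    intro n
    rw [hadef]
    simp only
    rw [hFexp n]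
    exact integral_const_mul _ _
  set D : ℝ := 3*((K+1)*(L+1)^2*C2)^2 + (K+1)*(L+1)^4*C4 with hDdef
  have hK1 : (0:ℝ) < K + 1 := by linarith
  have hL1 : (0:ℝ) < L + 1 := by linarith
  have hDnn : 0 ≤ D := by
    rw [hDdef]
    have h1 : (0:ℝ) ≤ 3*((K+1)*(L+1)^2*C2)^2 := by positivity
    have h2 : (0:ℝ) ≤ (K+1)*(L+1)^4*C4 := by
      apply mul_nonneg (by positivity) hC4nn
    linarith
  have hevK : ∀ᶠ n in atTop, (Kn n : ℝ) ≤ (K+1) * n := by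
    have h1 : ∀ᶠ n in atTop, (Kn n : ℝ)/n ≤ K+1 :=
      hKn.eventually_le_const (lt_add_one K)
    filter_upwards [h1, eventually_ge_atTop 1] with n hle hn1
    have hn0 : (0:ℝ) < n := by exact_mod_cast hn1
    rw [div_le_iff₀ hn0] at hle; linarith
  have hevL : ∀ᶠ n in atTop, (Ln n : ℝ) ≤ (L+1) * n := by
    have h1 : ∀ᶠ n in atTop, (Ln n : ℝ)/n ≤ L+1 :=
      hLn.eventually_le_const (lt_add_one L)
    filter_upwards [h1, eventually_ge_atTop 1] with n hle hn1
    have hn0 : (0:ℝ) < n := by exact_mod_cast hn1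
    rw [div_le_iff₀ hn0] at hle; linarith
  have hev : ∀ᶠ n in atTop, a n ≤ D * (1/(n:ℝ)^2) := by
    filter_upwards [hevK, hevL, eventually_ge_atTop 1] with n hKle hLle hn1
    have hn1' : (1:ℝ) ≤ (n:ℝ) := by exact_mod_cast hn1
    have hn0 : (0:ℝ) < n := by linarith
    have hKnn : (0:ℝ) ≤ (Kn n : ℝ) := Nat.cast_nonneg _
    have hLnn : (0:ℝ) ≤ (Ln n : ℝ) := Nat.cast_nonneg _
    have hbound : (∫ ω, (∑ k ∈ Finset.Icc 1 (Kn n), Y n k ω)^4 ∂ℙ) ≤ D * (n:ℝ)^6 := by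
      have h1 := (hSfacts n).2
      have h2 : 3 * ((Kn n:ℝ) * ((Ln n:ℝ)^2 * C2))^2 + (Kn n:ℝ) * ((Ln n:ℝ)^4 * C4)
          ≤ 3 * (((K+1)*(n:ℝ)) * (((L+1)*(n:ℝ))^2 * C2))^2
            + ((K+1)*(n:ℝ)) * (((L+1)*(n:ℝ))^4 * C4) := by
        gcongr
      have h3 : 3 * (((K+1)*(n:ℝ)) * (((L+1)*(n:ℝ))^2 * C2))^2
            + ((K+1)*(n:ℝ)) * (((L+1)*(n:ℝ))^4 * C4)
          = 3*((K+1)*(L+1)^2*C2)^2 * (n:ℝ)^6 + ((K+1)*(L+1)^4*C4) * (n:ℝ)^5 := by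
        ring
      have h4 : ((K+1)*(L+1)^4*C4) * (n:ℝ)^5 ≤ ((K+1)*(L+1)^4*C4) * (n:ℝ)^6 := by
        apply mul_le_mul_of_nonneg_left (pow_le_pow_right₀ hn1' (by norm_num))
        apply mul_nonneg (by positivity) hC4nn
      have h5 : D * (n:ℝ)^6 = 3*((K+1)*(L+1)^2*C2)^2 * (n:ℝ)^6
          + ((K+1)*(L+1)^4*C4) * (n:ℝ)^6 := by rw [hDdef]; ring
      linarith
    have hz : ((n:ℝ)^(-2:ℤ))^4 = ((n:ℝ)^8)⁻¹ := by
      have h1 : (n:ℝ)^(-2:ℤ) = ((n:ℝ)^2)⁻¹ := by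
        rw [zpow_neg]
        norm_cast
      rw [h1, inv_pow, ← pow_mul]
    rw [haeq n, hz]
    have hinv : (0:ℝ) ≤ ((n:ℝ)^8)⁻¹ := by positivity
    have h6 : ((n:ℝ)^8)⁻¹ * (∫ ω, (∑ k ∈ Finset.Icc 1 (Kn n), Y n k ω)^4 ∂ℙ)
        ≤ ((n:ℝ)^8)⁻¹ * (D * (n:ℝ)^6) := mul_le_mul_of_nonneg_left hbound hinv
    have h7 : ((n:ℝ)^8)⁻¹ * (D * (n:ℝ)^6) = D * (1/(n:ℝ)^2) := by
      field_simp
    linarith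
  have hbsum : Summable (fun n : ℕ => D * (1/(n:ℝ)^2)) :=
    (Real.summable_one_div_nat_pow.mpr (by norm_num)).mul_left D
  obtain ⟨N, hN⟩ := (eventually_atTop).1 hev
  have hasum : Summable a := by
    have htail : Summable (fun m => a (m + N)) :=
      Summable.of_nonneg_of_le (fun m => hann _) (fun m => hN (m+N) (by omega))
        ((summable_nat_add_iff (f := fun n : ℕ => D * (1/(n:ℝ)^2)) N).mpr hbsum)
    exact (summable_nat_add_iff (f := a) N).mp htail
  -- transfer to lintegral and conclude
  have hof : ∀ n, (∫⁻ ω, ENNReal.ofReal ((F n ω)^4) ∂ℙ) = ENNReal.ofReal (a n) := by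
    intro n
    rw [hadef]
    exact (ofReal_integral_eq_lintegral_ofReal (hIF4 n)
      (ae_of_all _ fun ω => by positivity)).symm
  have hmeas' : ∀ n, Measurable fun ω => ENNReal.ofReal ((F n ω)^4) :=
    fun n => (hmeasF4 n).ennreal_ofReal
  have htsum_ne : (∑' n, ∫⁻ ω, ENNReal.ofReal ((F n ω)^4) ∂ℙ) ≠ ⊤ := by
    simp_rw [hof]
    rw [← ENNReal.ofReal_tsum_of_nonneg hann hasum]
    exact ENNReal.ofReal_ne_top
  have hlim : ∀ᵐ ω ∂(ℙ:Measure Ω), (∑' n, ENNReal.ofReal ((F n ω)^4)) < ⊤ := by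
    refine ae_lt_top (Measurable.ennreal_tsum hmeas') ?_
    rw [lintegral_tsum fun n => (hmeas' n).aemeasurable]
    exact htsum_ne
  filter_upwards [hlim] with ω hω
  have h0 : Tendsto (fun n => ENNReal.ofReal ((F n ω)^4)) atTop (nhds 0) :=
    ENNReal.tendsto_atTop_zero_of_tsum_ne_top hω.ne
  have h4 : Tendsto (fun n => (F n ω)^4) atTop (nhds 0) := by
    have hc := (ENNReal.tendsto_toReal (by simp : (0:ℝ≥0∞) ≠ ⊤)).comp h0
    have heq : ∀ n, (ENNReal.ofReal ((F n ω)^4)).toReal = (F n ω)^4 :=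
      fun n => ENNReal.toReal_ofReal (by positivity)
    have hceq : (ENNReal.toReal ∘ fun n => ENNReal.ofReal ((F n ω)^4)) = fun n => (F n ω)^4 := by
      funext n; simp [Function.comp, heq n]
    rw [hceq] at hc
    simpa using hc
  have hFto : Tendsto (fun n => F n ω) atTop (nhds 0) := by
    rw [Metric.tendsto_atTop]
    intro ε hε
    obtain ⟨N', hN'⟩ := (Metric.tendsto_atTop.1 h4) (ε^4) (by positivity)
    refine ⟨N', fun n hn => ?_⟩
    have h := hN' n hn
    rw [Real.dist_eq, sub_zero] at h ⊢
    have h1 : (F n ω)^4 < ε^4 := lt_of_abs_lt h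
    have h2 : |F n ω|^4 < ε^4 := by
      rw [← abs_pow]
      calc |(F n ω)^4| = (F n ω)^4 := abs_of_nonneg (by positivity)
        _ < ε^4 := h1
    exact lt_of_pow_lt_pow_left₀ 4 (le_of_lt hε) h2
  exact hFto
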